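/- For any n ≥ m+1, any x_0, …, x_n ∈ ℝ, any ρ, ρ' ∈ ℝ and any t ∈ A_{n,m}, writing w = x − ρBx and w' = x − ρ'Bx, one has |J_n(w', t) − J_n(w, t)| ≤ (2|ρ − ρ'|/n) ‖Bx‖ (|ρ + ρ'| ‖Bx‖ + 2‖x‖). -/

import Mathlib

open MeasureTheory ProbabilityTheory Filter
open scoped RealInnerProductSpace

noncomputable section

/-- `X n = O_P(a n)`: for every `ε > 0` there are `M > 0` and `N` such that
`P(|X n| > M * a n) ≤ ε` for all `n ≥ N`. -/
def IsBigOP {Ω : Type*} [MeasurableSpace Ω] (P : Measure Ω)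
    (X : ℕ → Ω → ℝ) (a : ℕ → ℝ) : Prop :=
  ∀ ε : ℝ, 0 < ε → ∃ M : ℝ, 0 < M ∧ ∃ N : ℕ, ∀ n, N ≤ n →
    (P {ω | M * a n < |X n ω|}).toReal ≤ ε

/-- `A_{n,m}`: admissible change-point configurations
`0 = t_0 < t_1 < ⋯ < t_m < t_{m+1} = n`. -/
def Anm (n m : ℕ) : Set (Fin (m + 2) → ℕ) :=
  {t | t 0 = 0 ∧ t (Fin.last (m + 1)) = n ∧ StrictMono t}

/-- the indicator vector of the `k`-th segment `(t_k, t_{k+1}]` (coordinates `1,…,n`). -/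
def segVec (n m : ℕ) (t : Fin (m + 2) → ℕ) (k : Fin (m + 1)) :
    EuclideanSpace ℝ (Fin n) :=
  WithLp.toLp 2 (fun i => if t k.castSucc < (i : ℕ) + 1 ∧ (i : ℕ) + 1 ≤ t k.succ then 1 else 0)

/-- the linear span `E_t` of the segment indicator vectors. -/
def Esp (n m : ℕ) (t : Fin (m + 2) → ℕ) : Submodule ℝ (EuclideanSpace ℝ (Fin n)) :=
  Submodule.span ℝ (Set.range (segVec n m t))

/-- orthogonal projection `π_{E_t}` of `ℝⁿ` onto `E_t`. -/
def projE (n m : ℕ) (t : Fin (m + 2) → ℕ) (x : EuclideanSpace ℝ (Fin n)) :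
    EuclideanSpace ℝ (Fin n) :=
  ((Esp n m t).orthogonalProjectionOnto x : EuclideanSpace ℝ (Fin n))

/-- `x = (x_1, …, x_n)`. -/
def vecOf (n : ℕ) (x : ℕ → ℝ) : EuclideanSpace ℝ (Fin n) :=
  WithLp.toLp 2 (fun i => x ((i : ℕ) + 1))

/-- `Bx = (x_0, …, x_{n-1})`. -/
def bvecOf (n : ℕ) (x : ℕ → ℝ) : EuclideanSpace ℝ (Fin n) :=
  WithLp.toLp 2 (fun i => x (i : ℕ))

/-- the decorrelated vector `x - ρ Bx`. -/
def decor (n : ℕ) (x : ℕ → ℝ) (r : ℝ) : EuclideanSpace ℝ (Fin n) :=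
  vecOf n x - r • bvecOf n x

/-- `J_n(x, t) = (1/n)(‖π_{E_{t*}} x‖² - ‖π_{E_t} x‖²)`. -/
def Jn (n m : ℕ) (tstar t : Fin (m + 2) → ℕ) (x : EuclideanSpace ℝ (Fin n)) : ℝ :=
  (‖projE n m tstar x‖ ^ 2 - ‖projE n m t x‖ ^ 2) / n

/-- `K_n(x, t) = (1/n)‖(π_{E_{t*}} - π_{E_t}) 𝔼x‖²`. -/
def Kn (n m : ℕ) (tstar t : Fin (m + 2) → ℕ) (Ex : EuclideanSpace ℝ (Fin n)) : ℝ :=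
  ‖projE n m tstar Ex - projE n m t Ex‖ ^ 2 / n

/-- `V_n(x, t)`. -/
def Vn (n m : ℕ) (tstar t : Fin (m + 2) → ℕ) (x Ex : EuclideanSpace ℝ (Fin n)) : ℝ :=
  (‖projE n m tstar (x - Ex)‖ ^ 2 - ‖projE n m t (x - Ex)‖ ^ 2) / n

/-- `W_n(x, t)`. -/
def Wn (n m : ℕ) (tstar t : Fin (m + 2) → ℕ) (x Ex : EuclideanSpace ℝ (Fin n)) : ℝ :=
  2 * (⟪projE n m tstar (x - Ex), projE n m tstar Ex⟫ -
       ⟪projE n m t (x - Ex), projE n m t Ex⟫) / n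

/-- `C'_{ν,γ,n,m}(I)`: admissible configurations `t` with
`ν λ̲⁻² ≤ ‖t - t*‖ ≤ n γ Δ_{τ*}`, `t_k ≥ t*_k` for all `k`,
`ν λ̲⁻² ≤ t_k - t*_k ≤ n γ Δ_{τ*}` for `k ∈ I` and `t_k - t*_k < ν λ̲⁻²` for `k ∉ I`. -/
def CprimeI (n m : ℕ) (tstar : Fin (m + 2) → ℕ) (lamb Dtau ν γ : ℝ)
    (I : Set (Fin m)) : Set (Fin (m + 2) → ℕ) :=
  {t | t ∈ Anm n m ∧
    ν / lamb ^ 2 ≤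
      Real.sqrt (∑ k : Fin m,
        ((t k.castSucc.succ : ℝ) - (tstar k.castSucc.succ : ℝ)) ^ 2) ∧
    Real.sqrt (∑ k : Fin m,
        ((t k.castSucc.succ : ℝ) - (tstar k.castSucc.succ : ℝ)) ^ 2) ≤ n * γ * Dtau ∧
    (∀ k : Fin m, tstar k.castSucc.succ ≤ t k.castSucc.succ) ∧
    (∀ k : Fin m, k ∈ I →
      ν / lamb ^ 2 ≤ (t k.castSucc.succ : ℝ) - (tstar k.castSucc.succ : ℝ) ∧
      (t k.castSucc.succ : ℝ) - (tstar k.castSucc.succ : ℝ) ≤ n * γ * Dtau) ∧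
    (∀ k : Fin m, k ∉ I →
      (t k.castSucc.succ : ℝ) - (tstar k.castSucc.succ : ℝ) < ν / lamb ^ 2)}

lemma proj_norm_le (n m : ℕ) (t : Fin (m + 2) → ℕ) (v : EuclideanSpace ℝ (Fin n)) :
    ‖projE n m t v‖ ≤ ‖v‖ := by
  have h := ((Esp n m t).orthogonalProjectionOnto).le_opNorm v
  calc ‖projE n m t v‖ = ‖(Esp n m t).orthogonalProjectionOnto v‖ := rfl
    _ ≤ ‖(Esp n m t).orthogonalProjectionOnto‖ * ‖v‖ := h
    _ ≤ 1 * ‖v‖ := by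
        apply mul_le_mul_of_nonneg_right (Submodule.orthogonalProjectionOnto_norm_le _) (norm_nonneg v)
    _ = ‖v‖ := one_mul _

lemma proj_sq_diff (n m : ℕ) (t : Fin (m + 2) → ℕ) (w w' : EuclideanSpace ℝ (Fin n)) :
    |‖projE n m t w'‖ ^ 2 - ‖projE n m t w‖ ^ 2| ≤ ‖w' - w‖ * ‖w' + w‖ := by
  set a := projE n m t w'
  set b := projE n m t w
  have hid : ‖a‖ ^ 2 - ‖b‖ ^ 2 = ⟪a - b, a + b⟫ := by
    simp only [inner_sub_left, inner_add_right, real_inner_self_eq_norm_sq,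
      real_inner_comm a b]
    ring
  have hsub : a - b = projE n m t (w' - w) := by
    simp [a, b, projE, map_sub]
  have hadd : a + b = projE n m t (w' + w) := by
    simp [a, b, projE, map_add]
  rw [hid]
  calc |⟪a - b, a + b⟫| ≤ ‖a - b‖ * ‖a + b‖ := abs_real_inner_le_norm _ _
    _ ≤ ‖w' - w‖ * ‖w' + w‖ := by
        rw [hsub, hadd]
        exact mul_le_mul (proj_norm_le ..) (proj_norm_le ..) (norm_nonneg _)
          (norm_nonneg _)

theorem stmt_3 (m n : ℕ) (hm : 1 ≤ m) (hn : m + 1 ≤ n)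
    (tstar : Fin (m + 2) → ℕ) (htstar : tstar ∈ Anm n m)
    (x : ℕ → ℝ) (ρ ρ' : ℝ)
    (t : Fin (m + 2) → ℕ) (ht : t ∈ Anm n m) :
    |Jn n m tstar t (decor n x ρ') - Jn n m tstar t (decor n x ρ)| ≤
      2 * |ρ - ρ'| / n * ‖bvecOf n x‖ *
        (|ρ + ρ'| * ‖bvecOf n x‖ + 2 * ‖vecOf n x‖) := by
  
  set w := decor n x ρ with hw
  set w' := decor n x ρ' with hw'
  have h1 := proj_sq_diff n m tstar w w'
  have h2 := proj_sq_diff n m t w w'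
  have hnpos : (0 : ℝ) < (n : ℝ) := by
    have : 0 < n := lt_of_lt_of_le (Nat.succ_pos m) hn
    exact_mod_cast this
  have hsubv : w' - w = (ρ - ρ') • bvecOf n x := by
    simp only [hw, hw', decor]; module
  have haddv : w' + w = (2 : ℝ) • vecOf n x - (ρ + ρ') • bvecOf n x := by
    simp only [hw, hw', decor]; module
  have hns : ‖w' - w‖ = |ρ - ρ'| * ‖bvecOf n x‖ := by
    rw [hsubv, norm_smul, Real.norm_eq_abs]
  have hna : ‖w' + w‖ ≤ |ρ + ρ'| * ‖bvecOf n x‖ + 2 * ‖vecOf n x‖ := by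
    rw [haddv]
    calc ‖(2 : ℝ) • vecOf n x - (ρ + ρ') • bvecOf n x‖
        ≤ ‖(2 : ℝ) • vecOf n x‖ + ‖(ρ + ρ') • bvecOf n x‖ := norm_sub_le _ _
      _ = |ρ + ρ'| * ‖bvecOf n x‖ + 2 * ‖vecOf n x‖ := by
          rw [norm_smul, norm_smul, Real.norm_eq_abs, Real.norm_eq_abs]
          rw [abs_two]; ring
  have hD : |Jn n m tstar t w' - Jn n m tstar t w| ≤ 2 * (‖w' - w‖ * ‖w' + w‖) / n := by
    simp only [Jn, div_sub_div_same, abs_div, Nat.abs_cast]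
    gcongr ?_ / _
    have hre : (‖projE n m tstar w'‖ ^ 2 - ‖projE n m t w'‖ ^ 2) -
        (‖projE n m tstar w‖ ^ 2 - ‖projE n m t w‖ ^ 2) =
        (‖projE n m tstar w'‖ ^ 2 - ‖projE n m tstar w‖ ^ 2) -
        (‖projE n m t w'‖ ^ 2 - ‖projE n m t w‖ ^ 2) := by ring
    rw [hre]
    calc |(‖projE n m tstar w'‖ ^ 2 - ‖projE n m tstar w‖ ^ 2) -
        (‖projE n m t w'‖ ^ 2 - ‖projE n m t w‖ ^ 2)|
        ≤ |‖projE n m tstar w'‖ ^ 2 - ‖projE n m tstar w‖ ^ 2| +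
          |‖projE n m t w'‖ ^ 2 - ‖projE n m t w‖ ^ 2| := abs_sub _ _
      _ ≤ ‖w' - w‖ * ‖w' + w‖ + ‖w' - w‖ * ‖w' + w‖ := add_le_add h1 h2
      _ = 2 * (‖w' - w‖ * ‖w' + w‖) := by ring
  calc |Jn n m tstar t w' - Jn n m tstar t w|
      ≤ 2 * (‖w' - w‖ * ‖w' + w‖) / n := hD
    _ ≤ 2 * ((|ρ - ρ'| * ‖bvecOf n x‖) *
        (|ρ + ρ'| * ‖bvecOf n x‖ + 2 * ‖vecOf n x‖)) / n := by
        rw [hns]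
        gcongr
    _ = 2 * |ρ - ρ'| / n * ‖bvecOf n x‖ *
        (|ρ + ρ'| * ‖bvecOf n x‖ + 2 * ‖vecOf n x‖) := by ring
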